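/- arXiv:2009.12141 — 4 statements merged into one kernel-verified Lean document; each statement's English description precedes it below -/
import Mathlib

section
/- Let p, q : ℝ^d → ℝ be probability density functions with respect to Lebesgue measure, with p everywhere positive, log p twice continuously differentiable, and the gradient ∇ log p Lipschitz continuous with constant L ≥ 0. Let φ : ℝ^d → ℝ^d be continuously differentiable and let ε ≥ 0 be such that the map T(λ) = λ + ε φ(λ) is a C¹ diffeomorphism of ℝ^d. Assume the Kullback–Leibler divergences KL(μ_q ‖ μ_p) and KL(T#μ_q ‖ μ_p) are finite and that the function λ ↦ (-ε ⟨∇log p(λ), φ(λ)⟩ + (L ε²/2) ‖φ(λ)‖² − log |det(I + ε Dφ(λ))|) · q(λ) is Lebesgue integrable, where Dφ(λ) denotes the Jacobian matrix of φ at λ. Then KL(T#μ_q ‖ μ_p) − KL(μ_q ‖ μ_p) ≤ ∫ ( -ε ⟨∇log p(λ), φ(λ)⟩ + (L ε²/2) ‖φ(λ)‖² − log |det(I + ε Dφ(λ))| ) q(λ) dλ. -/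
open MeasureTheory
open scoped Classical ENNReal NNReal

/-- The Kullback–Leibler divergence between two measures: `∫ log (dμ/dν) dμ`
when `μ ≪ ν` and the log-likelihood ratio is integrable, `+∞` otherwise. -/
noncomputable def klDiv {α : Type*} [MeasurableSpace α] (μ ν : Measure α) : EReal :=
  if μ ≪ ν ∧ Integrable (llr μ ν) μ then ((∫ x, llr μ ν x ∂μ : ℝ) : EReal) else ⊤

/-- The measure on `ℝ^d` with density `f` with respect to Lebesgue measure. -/
noncomputable def densityMeasure {d : ℕ} (f : EuclideanSpace ℝ (Fin d) → ℝ) :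
    Measure (EuclideanSpace ℝ (Fin d)) :=
  volume.withDensity fun x => ENNReal.ofReal (f x)

lemma descent_lemma {E : Type*} [NormedAddCommGroup E] [InnerProductSpace ℝ E]
    [CompleteSpace E]
    (f : E → ℝ) (hf : ContDiff ℝ 2 f) (L : ℝ) (hL : 0 ≤ L)
    (hlip : ∀ x y : E, ‖gradient f x - gradient f y‖ ≤ L * ‖x - y‖)
    (x v : E) :
    f x - f (x + v) ≤ -(inner ℝ (gradient f x) v : ℝ) + L / 2 * ‖v‖ ^ 2 := by
  have hfd : Differentiable ℝ f := hf.differentiable two_ne_zero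
  have hgrad : ∀ (z w : E), (inner ℝ (gradient f z) w : ℝ) = fderiv ℝ f z w := by
    intro z w
    simp only [gradient, InnerProductSpace.toDual_symm_apply]
  have hc : ∀ t : ℝ, HasDerivAt (fun t : ℝ => x + t • v) v t := by
    intro t
    simpa using ((hasDerivAt_id t).smul_const v).const_add x
  have hg : ∀ t : ℝ, HasDerivAt (fun t : ℝ => f (x + t • v)) (fderiv ℝ f (x + t • v) v) t := by
    intro t
    exact (hfd (x + t • v)).hasFDerivAt.comp_hasDerivAt t (hc t)
  have hcont : Continuous fun t : ℝ => fderiv ℝ f (x + t • v) v := by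
    exact ((hf.continuous_fderiv two_ne_zero).comp
      (continuous_const.add (continuous_id.smul continuous_const))).clm_apply continuous_const
  have hftc : f (x + v) - f x = ∫ t in (0:ℝ)..1, fderiv ℝ f (x + t • v) v := by
    rw [intervalIntegral.integral_eq_sub_of_hasDerivAt (fun t _ => hg t)
      (hcont.intervalIntegrable 0 1)]
    simp
  have hlow : ∀ t ∈ Set.Icc (0:ℝ) 1,
      (inner ℝ (gradient f x) v : ℝ) - L * ‖v‖ ^ 2 * t ≤ fderiv ℝ f (x + t • v) v := by
    intro t ht
    have h2 := abs_real_inner_le_norm (gradient f (x + t • v) - gradient f x) v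
    have h3 : ‖gradient f (x + t • v) - gradient f x‖ ≤ L * (t * ‖v‖) := by
      have := hlip (x + t • v) x
      simpa [norm_smul, abs_of_nonneg ht.1, mul_assoc] using this
    have h4 : |(inner ℝ (gradient f (x + t • v) - gradient f x) v : ℝ)|
        ≤ L * ‖v‖ ^ 2 * t := by
      calc |(inner ℝ (gradient f (x + t • v) - gradient f x) v : ℝ)|
          ≤ ‖gradient f (x + t • v) - gradient f x‖ * ‖v‖ := h2
        _ ≤ L * (t * ‖v‖) * ‖v‖ := mul_le_mul_of_nonneg_right h3 (norm_nonneg v)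
        _ = L * ‖v‖ ^ 2 * t := by ring
    have h5 : (inner ℝ (gradient f (x + t • v) - gradient f x) v : ℝ)
        = fderiv ℝ f (x + t • v) v - (inner ℝ (gradient f x) v : ℝ) := by
      rw [inner_sub_left, hgrad]
    have h7 := (abs_le.mp h4).1
    rw [h5] at h7
    linarith
  have hint : ∫ t in (0:ℝ)..1, ((inner ℝ (gradient f x) v : ℝ) - L * ‖v‖ ^ 2 * t)
      = (inner ℝ (gradient f x) v : ℝ) - L / 2 * ‖v‖ ^ 2 := by
    have h1 : IntervalIntegrable (fun t : ℝ => L * ‖v‖ ^ 2 * t) volume 0 1 :=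
      (Continuous.intervalIntegrable (by fun_prop) 0 1)
    rw [intervalIntegral.integral_sub intervalIntegrable_const h1,
      intervalIntegral.integral_const_mul, integral_id]
    simp
    ring
  have hmono : (inner ℝ (gradient f x) v : ℝ) - L / 2 * ‖v‖ ^ 2
      ≤ ∫ t in (0:ℝ)..1, fderiv ℝ f (x + t • v) v := by
    rw [← hint]
    refine intervalIntegral.integral_mono_on zero_le_one ?_ (hcont.intervalIntegrable 0 1) hlow
    exact (Continuous.intervalIntegrable (by fun_prop) 0 1)
  rw [← hftc] at hmono
  linarith



/-- Core inequality in the proof of Theorem 1: for probability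
densities `p, q` with `p > 0`, `log p` C², `∇ log p` `L`-Lipschitz, a C¹ map
`φ` and `ε ≥ 0` such that `T(λ) = λ + ε φ(λ)` is a C¹ diffeomorphism of `ℝ^d`
(with C¹ inverse `S`), assuming the KL divergences are finite and the
integrand is integrable,
`KL(T#μ_q ‖ μ_p) − KL(μ_q ‖ μ_p)
  ≤ ∫ (-ε ⟪∇ log p(λ), φ(λ)⟫ + (L ε²/2)‖φ(λ)‖² − log |det (I + ε Dφ(λ))|) q(λ) dλ`. -/
theorem klDiv_pushforward_sub_klDiv_le {d : ℕ}
    (q p : EuclideanSpace ℝ (Fin d) → ℝ)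
    (hq_meas : Measurable q) (hq_nonneg : ∀ x, 0 ≤ q x)
    (hq_int : ∫ x, q x = 1)
    (hp_meas : Measurable p) (hp_pos : ∀ x, 0 < p x)
    (hp_int : ∫ x, p x = 1)
    (hlogp : ContDiff ℝ 2 (fun x => Real.log (p x)))
    (L : ℝ) (hL : 0 ≤ L)
    (hlip : ∀ x y : EuclideanSpace ℝ (Fin d),
      ‖gradient (fun z => Real.log (p z)) x
        - gradient (fun z => Real.log (p z)) y‖ ≤ L * ‖x - y‖)
    (φ : EuclideanSpace ℝ (Fin d) → EuclideanSpace ℝ (Fin d))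
    (hφ : ContDiff ℝ 1 φ) (ε : ℝ) (hε : 0 ≤ ε)
    (S : EuclideanSpace ℝ (Fin d) → EuclideanSpace ℝ (Fin d))
    (hS : ContDiff ℝ 1 S)
    (hST : Function.LeftInverse S (fun lam => lam + ε • φ lam))
    (hTS : Function.RightInverse S (fun lam => lam + ε • φ lam))
    (hfin₁ : klDiv (densityMeasure q) (densityMeasure p) ≠ ⊤)
    (hfin₂ : klDiv ((densityMeasure q).map (fun lam => lam + ε • φ lam))
      (densityMeasure p) ≠ ⊤)
    (hint : Integrable (fun lam =>
      (-ε * (inner ℝ (gradient (fun z => Real.log (p z)) lam) (φ lam) : ℝ)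
        + L * ε ^ 2 / 2 * ‖φ lam‖ ^ 2
        - Real.log
            |(ContinuousLinearMap.id ℝ (EuclideanSpace ℝ (Fin d))
              + ε • fderiv ℝ φ lam).det|) * q lam)) :
    (klDiv ((densityMeasure q).map (fun lam => lam + ε • φ lam))
          (densityMeasure p)).toReal
        - (klDiv (densityMeasure q) (densityMeasure p)).toReal
      ≤ ∫ lam,
          (-ε * (inner ℝ (gradient (fun z => Real.log (p z)) lam) (φ lam) : ℝ)
            + L * ε ^ 2 / 2 * ‖φ lam‖ ^ 2
            - Real.log
                |(ContinuousLinearMap.id ℝ (EuclideanSpace ℝ (Fin d))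
                  + ε • fderiv ℝ φ lam).det|) * q lam := by
  set T : EuclideanSpace ℝ (Fin d) → EuclideanSpace ℝ (Fin d) :=
    fun lam => lam + ε • φ lam with hTdef
  -- basic integrability of the densities
  have hqint' : Integrable q := by
    by_contra h
    rw [integral_undef h] at hq_int; norm_num at hq_int
  have hpint' : Integrable p := by
    by_contra h
    rw [integral_undef h] at hp_int; norm_num at hp_int
  -- smoothness facts
  have hTcd : ContDiff ℝ 1 T := contDiff_id.add (hφ.const_smul ε)
  have hTdiff : Differentiable ℝ T := hTcd.differentiable one_ne_zero
  have hSdiff : Differentiable ℝ S := hS.differentiable one_ne_zero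
  have hTmeas : Measurable T := hTcd.continuous.measurable
  have hSmeas : Measurable S := hS.continuous.measurable
  have hSinj : Function.Injective S := hTS.injective
  -- derivative of T
  have hDT : ∀ lam, HasFDerivAt T
      (ContinuousLinearMap.id ℝ (EuclideanSpace ℝ (Fin d)) + ε • fderiv ℝ φ lam) lam :=
    fun lam => (hasFDerivAt_id lam).add ((((hφ.differentiable one_ne_zero) lam).hasFDerivAt).const_smul ε)
  have hfdT : ∀ lam, fderiv ℝ T lam
      = ContinuousLinearMap.id ℝ (EuclideanSpace ℝ (Fin d)) + ε • fderiv ℝ φ lam :=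
    fun lam => (hDT lam).fderiv
  -- chain rule : DS(T lam) ∘ DT(lam) = id
  have hcomp : ∀ lam, (fderiv ℝ S (T lam)).comp (fderiv ℝ T lam)
      = ContinuousLinearMap.id ℝ (EuclideanSpace ℝ (Fin d)) := by
    intro lam
    have h1 : HasFDerivAt (S ∘ T) ((fderiv ℝ S (T lam)).comp (fderiv ℝ T lam)) lam :=
      (hSdiff (T lam)).hasFDerivAt.comp lam (hTdiff lam).hasFDerivAt
    have h2 : S ∘ T = id := funext hST
    rw [h2] at h1
    exact h1.unique (hasFDerivAt_id lam)
  have hdetmul : ∀ lam, (fderiv ℝ S (T lam)).det * (fderiv ℝ T lam).det = 1 := by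
    intro lam
    have h := congrArg ContinuousLinearMap.det (hcomp lam)
    simpa [ContinuousLinearMap.det, ContinuousLinearMap.coe_comp, LinearMap.det_comp] using h
  have hdetT_ne : ∀ lam, (fderiv ℝ T lam).det ≠ 0 :=
    fun lam => right_ne_zero_of_mul_eq_one (hdetmul lam)
  have hdetS_ne : ∀ lam, (fderiv ℝ S (T lam)).det ≠ 0 :=
    fun lam => left_ne_zero_of_mul_eq_one (hdetmul lam)
  -- klDiv unfolding
  have h1 : densityMeasure q ≪ densityMeasure p
      ∧ Integrable (llr (densityMeasure q) (densityMeasure p)) (densityMeasure q) := by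
    by_contra h; rw [klDiv, if_neg h] at hfin₁; exact hfin₁ rfl
  have h2 : ((densityMeasure q).map T) ≪ densityMeasure p
      ∧ Integrable (llr ((densityMeasure q).map T) (densityMeasure p))
        ((densityMeasure q).map T) := by
    by_contra h; rw [klDiv, if_neg h] at hfin₂; exact hfin₂ rfl
  have hklQ : (klDiv (densityMeasure q) (densityMeasure p)).toReal
      = ∫ x, llr (densityMeasure q) (densityMeasure p) x ∂(densityMeasure q) := by
    rw [klDiv, if_pos h1]; exact EReal.toReal_coe _
  have hklQT : (klDiv ((densityMeasure q).map T) (densityMeasure p)).toReal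
      = ∫ x, llr ((densityMeasure q).map T) (densityMeasure p) x
          ∂((densityMeasure q).map T) := by
    rw [klDiv, if_pos h2]; exact EReal.toReal_coe _
  -- finiteness of densityMeasure p
  have hPfin : IsFiniteMeasure (densityMeasure p) := by
    constructor
    show (volume.withDensity fun x => ENNReal.ofReal (p x)) Set.univ < ⊤
    rw [withDensity_apply _ MeasurableSet.univ, Measure.restrict_univ,
      ← ofReal_integral_eq_lintegral_ofReal hpint' (ae_of_all _ fun x => (hp_pos x).le),
      hp_int]
    simp
  haveI := hPfin
  -- measurability of densities
  have hmeasq : Measurable fun x => ENNReal.ofReal (q x) := hq_meas.ennreal_ofReal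
  have hmeasp : Measurable fun x => ENNReal.ofReal (p x) := hp_meas.ennreal_ofReal
  have hp_ne0 : ∀ x, ENNReal.ofReal (p x) ≠ 0 := fun x => (ENNReal.ofReal_pos.mpr (hp_pos x)).ne'
  -- rnDeriv and llr of Q w.r.t. P
  have hqdiv : Measurable fun x => ENNReal.ofReal (q x) / ENNReal.ofReal (p x) :=
    hmeasq.div hmeasp
  have hQrepr : densityMeasure q = (densityMeasure p).withDensity
      (fun x => ENNReal.ofReal (q x) / ENNReal.ofReal (p x)) := by
    show volume.withDensity _ = (volume.withDensity _).withDensity _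
    rw [← withDensity_mul _ hmeasp hqdiv]
    congr 1; funext x
    exact (ENNReal.mul_div_cancel (hp_ne0 x) ENNReal.ofReal_ne_top).symm
  have hrnQ : (densityMeasure q).rnDeriv (densityMeasure p)
      =ᵐ[densityMeasure p] fun x => ENNReal.ofReal (q x) / ENNReal.ofReal (p x) := by
    have h := Measure.rnDeriv_withDensity (densityMeasure p) hqdiv
    rwa [← hQrepr] at h
  have hllrQ : llr (densityMeasure q) (densityMeasure p)
      =ᵐ[densityMeasure q] fun x => Real.log (q x / p x) := by
    filter_upwards [h1.1.ae_eq hrnQ] with x hx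
    simp only [llr]
    rw [hx, ENNReal.toReal_div, ENNReal.toReal_ofReal (hq_nonneg x),
      ENNReal.toReal_ofReal (hp_pos x).le]
  -- representation of the pushforward measure
  have hdetSmeas : Measurable fun x => |(fderiv ℝ S x).det| :=
    ((ContinuousLinearMap.continuous_det.comp (hS.continuous_fderiv one_ne_zero)).abs).measurable
  have hQTrepr : (densityMeasure q).map T = volume.withDensity
      (fun x => ENNReal.ofReal |(fderiv ℝ S x).det| * ENNReal.ofReal (q (S x))) := by
    ext A hA
    rw [Measure.map_apply hTmeas hA]
    have himg : T ⁻¹' A = S '' A := by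
      ext x
      constructor
      · intro hx; exact ⟨T x, hx, hST x⟩
      · rintro ⟨a, ha, rfl⟩
        simpa [Set.mem_preimage, hTS a] using ha
    have hSA : MeasurableSet (S '' A) := himg ▸ hTmeas hA
    show (volume.withDensity fun x => ENNReal.ofReal (q x)) _ = _
    rw [himg, withDensity_apply _ hSA, withDensity_apply _ hA]
    exact lintegral_image_eq_lintegral_abs_det_fderiv_mul volume hA
      (fun x _ => (hSdiff x).hasFDerivAt.hasFDerivWithinAt) (hSinj.injOn) _
  have hQTfn : Measurable fun x =>
      ENNReal.ofReal |(fderiv ℝ S x).det| * ENNReal.ofReal (q (S x)) :=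
    (hdetSmeas.ennreal_ofReal).mul ((hq_meas.comp hSmeas).ennreal_ofReal)
  have hQTdiv : Measurable fun x =>
      (ENNReal.ofReal |(fderiv ℝ S x).det| * ENNReal.ofReal (q (S x))) / ENNReal.ofReal (p x) :=
    hQTfn.div hmeasp
  have hQTrepr2 : (densityMeasure q).map T = (densityMeasure p).withDensity
      (fun x => (ENNReal.ofReal |(fderiv ℝ S x).det| * ENNReal.ofReal (q (S x)))
        / ENNReal.ofReal (p x)) := by
    rw [hQTrepr]
    show volume.withDensity _ = (volume.withDensity _).withDensity _
    rw [← withDensity_mul _ hmeasp hQTdiv]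
    congr 1; funext x
    exact (ENNReal.mul_div_cancel (hp_ne0 x) ENNReal.ofReal_ne_top).symm
  have hrnQT : ((densityMeasure q).map T).rnDeriv (densityMeasure p)
      =ᵐ[densityMeasure p] fun x =>
        (ENNReal.ofReal |(fderiv ℝ S x).det| * ENNReal.ofReal (q (S x)))
          / ENNReal.ofReal (p x) := by
    have h := Measure.rnDeriv_withDensity (densityMeasure p) hQTdiv
    rwa [← hQTrepr2] at h
  have hllrQT : llr ((densityMeasure q).map T) (densityMeasure p)
      =ᵐ[(densityMeasure q).map T]
        fun x => Real.log (|(fderiv ℝ S x).det| * q (S x) / p x) := by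
    filter_upwards [h2.1.ae_eq hrnQT] with x hx
    simp only [llr]
    rw [hx, ENNReal.toReal_div, ENNReal.toReal_mul, ENNReal.toReal_ofReal (abs_nonneg _),
      ENNReal.toReal_ofReal (hq_nonneg _), ENNReal.toReal_ofReal (hp_pos _).le]
  -- pull the a.e. identity back along T
  have hgmeas : Measurable fun x => Real.log (|(fderiv ℝ S x).det| * q (S x) / p x) :=
    Real.measurable_log.comp (((hdetSmeas.mul (hq_meas.comp hSmeas)).div hp_meas))
  have hllrQT_T : (fun lam => llr ((densityMeasure q).map T) (densityMeasure p) (T lam))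
      =ᵐ[densityMeasure q]
        fun lam => Real.log (|(fderiv ℝ S (T lam)).det| * q lam / p (T lam)) := by
    have hset : MeasurableSet {x | llr ((densityMeasure q).map T) (densityMeasure p) x
        = Real.log (|(fderiv ℝ S x).det| * q (S x) / p x)} :=
      measurableSet_eq_fun (measurable_llr _ _) hgmeas
    have h := (MeasureTheory.ae_map_iff hTmeas.aemeasurable hset).mp hllrQT
    filter_upwards [h] with lam hlam
    rw [hlam, hST lam]
  -- express the difference of KL divergences as one integral over Q
  have hintT : Integrable
      (fun lam => llr ((densityMeasure q).map T) (densityMeasure p) (T lam))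
      (densityMeasure q) :=
    (integrable_map_measure (measurable_llr _ _).aestronglyMeasurable
      hTmeas.aemeasurable).mp h2.2
  have hdiffeq : (klDiv ((densityMeasure q).map T) (densityMeasure p)).toReal
      - (klDiv (densityMeasure q) (densityMeasure p)).toReal
      = ∫ lam, (llr ((densityMeasure q).map T) (densityMeasure p) (T lam)
          - llr (densityMeasure q) (densityMeasure p) lam) ∂(densityMeasure q) := by
    rw [hklQT, hklQ,
      integral_map hTmeas.aemeasurable (measurable_llr _ _).aestronglyMeasurable,
      ← integral_sub hintT h1.2]
  -- q is positive a.e. w.r.t. Q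
  have hqpos : ∀ᵐ lam ∂(densityMeasure q), 0 < q lam := by
    show ∀ᵐ lam ∂(volume.withDensity fun x => ENNReal.ofReal (q x)), 0 < q lam
    rw [ae_withDensity_iff hmeasq]
    refine ae_of_all _ fun x hx => ?_
    by_contra h
    push_neg at h
    exact hx (by simp [ENNReal.ofReal_eq_zero.mpr h])
  -- the integrand equals G a.e.
  have hGeq : (fun lam => llr ((densityMeasure q).map T) (densityMeasure p) (T lam)
      - llr (densityMeasure q) (densityMeasure p) lam)
      =ᵐ[densityMeasure q] fun lam => Real.log (p lam) - Real.log (p (T lam))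
        - Real.log |(ContinuousLinearMap.id ℝ (EuclideanSpace ℝ (Fin d))
            + ε • fderiv ℝ φ lam).det| := by
    filter_upwards [hllrQT_T, hllrQ, hqpos] with lam e1 e2 e3
    rw [e1, e2, ← hfdT lam]
    have hq0 : q lam ≠ 0 := ne_of_gt e3
    have hp0 : p lam ≠ 0 := (hp_pos lam).ne'
    have hpT0 : p (T lam) ≠ 0 := (hp_pos (T lam)).ne'
    have habsS : |(fderiv ℝ S (T lam)).det| ≠ 0 := abs_ne_zero.mpr (hdetS_ne lam)
    have hSabs : Real.log |(fderiv ℝ S (T lam)).det|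
        = - Real.log |(fderiv ℝ T lam).det| := by
      have hm : |(fderiv ℝ S (T lam)).det| * |(fderiv ℝ T lam).det| = 1 := by
        rw [← abs_mul, hdetmul lam, abs_one]
      have hl := Real.log_mul habsS (abs_ne_zero.mpr (hdetT_ne lam))
      rw [hm, Real.log_one] at hl
      linarith
    rw [Real.log_div (mul_ne_zero habsS hq0) hpT0, Real.log_mul habsS hq0,
      Real.log_div hq0 hp0, hSabs]
    ring
  -- integrability of G against Q and against volume
  have hGint : Integrable (fun lam => Real.log (p lam) - Real.log (p (T lam))
      - Real.log |(ContinuousLinearMap.id ℝ (EuclideanSpace ℝ (Fin d))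
          + ε • fderiv ℝ φ lam).det|) (densityMeasure q) :=
    (hintT.sub h1.2).congr hGeq
  have hGqint : Integrable (fun lam => (Real.log (p lam) - Real.log (p (T lam))
      - Real.log |(ContinuousLinearMap.id ℝ (EuclideanSpace ℝ (Fin d))
          + ε • fderiv ℝ φ lam).det|) * q lam) volume := by
    have h := (integrable_withDensity_iff hmeasq
      (ae_of_all _ fun x => ENNReal.ofReal_lt_top)).mp hGint
    exact h.congr (ae_of_all _ fun x => by simp [ENNReal.toReal_ofReal (hq_nonneg x)])
  have hGinteq : ∫ lam, (Real.log (p lam) - Real.log (p (T lam))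
      - Real.log |(ContinuousLinearMap.id ℝ (EuclideanSpace ℝ (Fin d))
          + ε • fderiv ℝ φ lam).det|) ∂(densityMeasure q)
      = ∫ lam, (Real.log (p lam) - Real.log (p (T lam))
      - Real.log |(ContinuousLinearMap.id ℝ (EuclideanSpace ℝ (Fin d))
          + ε • fderiv ℝ φ lam).det|) * q lam := by
    show ∫ lam, _ ∂(volume.withDensity fun x => ((Real.toNNReal (q x) : ℝ≥0) : ℝ≥0∞)) = _
    rw [integral_withDensity_eq_integral_smul hq_meas.real_toNNReal]
    refine integral_congr_ae (ae_of_all _ fun x => ?_)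
    simp [NNReal.smul_def, Real.coe_toNNReal _ (hq_nonneg x), mul_comm]
  rw [hdiffeq, integral_congr_ae hGeq, hGinteq]
  refine integral_mono hGqint hint fun lam => ?_
  refine mul_le_mul_of_nonneg_right ?_ (hq_nonneg lam)
  have hd := descent_lemma (fun z => Real.log (p z)) hlogp L hL hlip lam (ε • φ lam)
  have hd2 : Real.log (p lam) - Real.log (p (T lam))
      ≤ -(inner ℝ (gradient (fun z => Real.log (p z)) lam) (ε • φ lam) : ℝ)
        + L / 2 * ‖ε • φ lam‖ ^ 2 := hd
  rw [real_inner_smul_right] at hd2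
  have h2' : ‖ε • φ lam‖ ^ 2 = ε ^ 2 * ‖φ lam‖ ^ 2 := by
    rw [norm_smul, Real.norm_eq_abs, abs_of_nonneg hε, mul_pow]
  rw [h2'] at hd2
  have h3' : L / 2 * (ε ^ 2 * ‖φ lam‖ ^ 2) = L * ε ^ 2 / 2 * ‖φ lam‖ ^ 2 := by ring
  rw [h3'] at hd2
  linarith
end

section
/- Let p, q : ℝ^d → ℝ be probability density functions with respect to Lebesgue measure, with p everywhere positive, log p twice continuously differentiable, and ∇ log p Lipschitz continuous with constant L ≥ 0. Let φ : ℝ^d → ℝ^d be continuously differentiable and let ε ≥ 0 be such that T(λ) = λ + ε φ(λ) is a C¹ diffeomorphism of ℝ^d, and such that for every λ the Jacobian matrix Dφ(λ) is symmetric with ε ‖Dφ(λ)‖_op ≤ 1/2. Assume KL(μ_q ‖ μ_p) and KL(T#μ_q ‖ μ_p) are finite and the integrability conditions as above hold. Set S = ∫ (⟨∇log p(λ), φ(λ)⟩ + trace(Dφ(λ))) q(λ) dλ and R = ∫ ((L/2) ‖φ(λ)‖² + ‖Dφ(λ)‖_F²) q(λ) dλ. If S ≥ 0 and ε R ≤ S,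 then KL(T#μ_q ‖ μ_p) ≤ KL(μ_q ‖ μ_p); that is, one SVGD-type update does not increase the Kullback–Leibler divergence to the target density p. -/
open MeasureTheory
open scoped Classical
open scoped ENNReal NNReal

/-- The squared Frobenius norm of the Jacobian `Dφ(λ)` of `φ` at `lam`:
`∑ i j, (∂φᵢ/∂λⱼ)²`. -/
noncomputable def jacobianFrobSq {d : ℕ}
    (φ : EuclideanSpace ℝ (Fin d) → EuclideanSpace ℝ (Fin d))
    (lam : EuclideanSpace ℝ (Fin d)) : ℝ :=
  ∑ i, ∑ j, (fderiv ℝ φ lam (EuclideanSpace.single j 1) i) ^ 2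


lemma aux_log_one_add {t : ℝ} (ht : |t| ≤ 1/2) : t - t^2 ≤ Real.log (1+t) := by
  have h1 : -(1/2 : ℝ) ≤ t := neg_le_of_abs_le ht
  have h2 : t ≤ 1/2 := le_of_abs_le ht
  set h : ℝ → ℝ := fun t => Real.log (1+t) - t + t^2 with hh
  have hderiv : ∀ s ∈ Set.Ioo (-(1/2):ℝ) (1/2), HasDerivAt h (1/(1+s) - 1 + 2*s) s := by
    intro s hs
    have hpos : (0:ℝ) < 1 + s := by nlinarith [hs.1]
    have H1 : HasDerivAt (fun u : ℝ => Real.log (1+u)) (1/(1+s)) s := by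
      have := (Real.hasDerivAt_log hpos.ne').comp s ((hasDerivAt_id s).const_add 1)
      simpa [one_div, Function.comp_def] using this
    have H2 : HasDerivAt (fun u : ℝ => u^2) (2*s) s := by
      simpa using (hasDerivAt_pow 2 s)
    exact (H1.sub (hasDerivAt_id s)).add H2
  have key : ∀ s ∈ Set.Icc (-(1/2):ℝ) (1/2), (0:ℝ) ≤ h s := by
    intro s hs
    have hc : ContinuousOn h (Set.Icc (-(1/2):ℝ) (1/2)) := by
      apply ContinuousOn.add (ContinuousOn.sub ?_ (continuousOn_id)) (by fun_prop)
      apply (Real.continuousOn_log.comp (by fun_prop) ?_)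
      intro u hu
      simp only [Set.mem_compl_iff, Set.mem_singleton_iff]
      have := hu.1; intro hc; nlinarith [hu.1]
    rcases le_or_gt 0 s with hs0 | hs0
    · -- monotone on [0, 1/2]
      have hm : MonotoneOn h (Set.Icc (0:ℝ) (1/2)) := by
        apply monotoneOn_of_deriv_nonneg (convex_Icc _ _)
          (hc.mono (by intro u hu; exact ⟨by linarith [hu.1], hu.2⟩))
        · intro u hu
          rw [interior_Icc] at hu
          exact ((hderiv u ⟨by linarith [hu.1], hu.2⟩).differentiableAt).differentiableWithinAt
        · intro u hu
          rw [interior_Icc] at hu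
          rw [(hderiv u ⟨by linarith [hu.1], hu.2⟩).deriv]
          have hpos : (0:ℝ) < 1 + u := by linarith [hu.1]
          have heq : 1/(1+u) - 1 + 2*u = (u*(1+2*u))/(1+u) := by field_simp; ring
          rw [heq]
          have : (0:ℝ) ≤ u * (1 + 2*u) := by nlinarith [hu.1]
          positivity
      have h0 : h 0 = 0 := by simp [hh]
      have := hm ⟨le_rfl, by norm_num⟩ ⟨hs0, hs.2⟩ hs0
      simpa [h0] using this
    · -- antitone on [-1/2, 0]
      have hm : AntitoneOn h (Set.Icc (-(1/2):ℝ) 0) := by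
        apply antitoneOn_of_deriv_nonpos (convex_Icc _ _)
          (hc.mono (by intro u hu; exact ⟨hu.1, by linarith [hu.2]⟩))
        · intro u hu
          rw [interior_Icc] at hu
          exact ((hderiv u ⟨hu.1, by linarith [hu.2]⟩).differentiableAt).differentiableWithinAt
        · intro u hu
          rw [interior_Icc] at hu
          rw [(hderiv u ⟨hu.1, by linarith [hu.2]⟩).deriv]
          have hpos : (0:ℝ) < 1 + u := by nlinarith [hu.1]
          have heq : 1/(1+u) - 1 + 2*u = (u*(1+2*u))/(1+u) := by field_simp; ring
          rw [heq]
          apply div_nonpos_of_nonpos_of_nonneg _ hpos.le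
          nlinarith [hu.1, hu.2]
      have h0 : h 0 = 0 := by simp [hh]
      have := hm ⟨hs.1, hs0.le⟩ ⟨by norm_num, le_rfl⟩ hs0.le
      simpa [h0] using this
  have := key t ⟨h1, h2⟩
  simp only [hh] at this
  linarith

lemma aux_logdet {d : ℕ} (A : EuclideanSpace ℝ (Fin d) →L[ℝ] EuclideanSpace ℝ (Fin d))
    (hsymm : LinearMap.IsSymmetric (A.toLinearMap)) (ε : ℝ) (hε : 0 ≤ ε)
    (hop : ε * ‖A‖ ≤ 1/2) :
    0 < (ContinuousLinearMap.id ℝ (EuclideanSpace ℝ (Fin d)) + ε • A).det ∧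
    ε * (LinearMap.trace ℝ _ A.toLinearMap)
      - ε^2 * (∑ i, ∑ j, (A (EuclideanSpace.single j 1) i)^2)
      ≤ Real.log (ContinuousLinearMap.id ℝ (EuclideanSpace ℝ (Fin d)) + ε • A).det := by
  classical
  set E := EuclideanSpace ℝ (Fin d)
  have hn : Module.finrank ℝ E = d := finrank_euclideanSpace_fin
  set b := hsymm.eigenvectorBasis hn with hb
  set γ := hsymm.eigenvalues hn with hγ
  have hAb : ∀ i, A (b i) = γ i • b i := fun i => hsymm.apply_eigenvectorBasis hn i
  have hnb : ∀ i, ‖b i‖ = 1 := fun i => b.orthonormal.1 i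
  have hγle : ∀ i, |γ i| ≤ ‖A‖ := by
    intro i
    have h := A.le_opNorm (b i)
    rw [hAb i, norm_smul, hnb i, mul_one, mul_one, Real.norm_eq_abs] at h
    exact h
  -- matrix of B is diagonal
  set B := ContinuousLinearMap.id ℝ E + ε • A with hB
  have hBb : ∀ i, B (b i) = (1 + ε * γ i) • b i := by
    intro i
    simp [hB, hAb i, smul_smul, add_smul]
  have hmat : LinearMap.toMatrix b.toBasis b.toBasis B.toLinearMap
      = Matrix.diagonal (fun i => 1 + ε * γ i) := by
    ext i j
    rw [LinearMap.toMatrix_apply]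
    simp only [OrthonormalBasis.coe_toBasis, ContinuousLinearMap.coe_coe]
    rw [hBb j, _root_.map_smul,
      show b j = b.toBasis j by rw [OrthonormalBasis.coe_toBasis], Module.Basis.repr_self]
    by_cases h : i = j
    · subst h; simp [Matrix.diagonal_apply_eq]
    · simp [Matrix.diagonal_apply_ne _ h, Finsupp.single_eq_of_ne h]
  have hdet : B.det = ∏ i, (1 + ε * γ i) := by
    rw [ContinuousLinearMap.det, ← LinearMap.det_toMatrix b.toBasis, hmat, Matrix.det_diagonal]
  have htr : LinearMap.trace ℝ E A.toLinearMap = ∑ i, γ i := by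
    have hmatA : LinearMap.toMatrix b.toBasis b.toBasis A.toLinearMap
        = Matrix.diagonal γ := by
      ext i j
      rw [LinearMap.toMatrix_apply]
      simp only [OrthonormalBasis.coe_toBasis, ContinuousLinearMap.coe_coe]
      rw [hAb j, _root_.map_smul,
        show b j = b.toBasis j by rw [OrthonormalBasis.coe_toBasis], Module.Basis.repr_self]
      by_cases h : i = j
      · subst h; simp [Matrix.diagonal_apply_eq]
      · simp [Matrix.diagonal_apply_ne _ h, Finsupp.single_eq_of_ne h]
    rw [LinearMap.trace_eq_matrix_trace ℝ b.toBasis, hmatA, Matrix.trace_diagonal]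
  have habs : ∀ i, |ε * γ i| ≤ 1/2 := by
    intro i
    rw [abs_mul, abs_of_nonneg hε]
    exact le_trans (by nlinarith [hγle i, abs_nonneg (γ i)]) hop
  have hpos : ∀ i, (0:ℝ) < 1 + ε * γ i := by
    intro i
    have := neg_le_of_abs_le (habs i)
    linarith
  have hdetpos : 0 < B.det := by
    rw [hdet]; exact Finset.prod_pos fun i _ => hpos i
  refine ⟨hdetpos, ?_⟩
  -- Frobenius bound : ∑ γ² ≤ frobSq
  have hfrob : ∑ i, (γ i)^2 ≤ ∑ i, ∑ j, (A (EuclideanSpace.single j 1) i)^2 := by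
    set e : OrthonormalBasis (Fin d) ℝ E := EuclideanSpace.basisFun (Fin d) ℝ with he
    have hesingle : ∀ j, e j = EuclideanSpace.single j 1 := by
      intro j; rw [he, EuclideanSpace.basisFun_apply]
    have hns : ∀ v : EuclideanSpace ℝ (Fin d), ‖v‖^2 = ∑ i, (v i)^2 := by
      intro v
      rw [EuclideanSpace.norm_eq, Real.sq_sqrt (by positivity)]
      refine Finset.sum_congr rfl fun i _ => ?_
      rw [Real.norm_eq_abs, sq_abs]
    have step1 : ∑ i, ∑ j, (A (EuclideanSpace.single j 1) i)^2
        = ∑ j, ∑ i, (inner ℝ (A (e j)) (b i) : ℝ)^2 := by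
      rw [Finset.sum_comm]
      refine Finset.sum_congr rfl fun j _ => ?_
      calc ∑ i, (A (EuclideanSpace.single j 1) i)^2 = ‖A (e j)‖^2 := by
            rw [hesingle, hns]
        _ = (inner ℝ (A (e j)) (A (e j)) : ℝ) := (real_inner_self_eq_norm_sq _).symm
        _ = ∑ i, (inner ℝ (A (e j)) (b i) : ℝ) * inner ℝ (b i) (A (e j)) :=
            (b.sum_inner_mul_inner _ _).symm
        _ = ∑ i, (inner ℝ (A (e j)) (b i) : ℝ)^2 := by
            refine Finset.sum_congr rfl fun i _ => ?_
            rw [real_inner_comm (b i), sq]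
    have step2 : ∀ j i, (inner ℝ (A (e j)) (b i) : ℝ) = γ i * inner ℝ (b i) (e j) := by
      intro j i
      rw [real_inner_comm]
      have h := hsymm (b i) (e j)
      simp only [ContinuousLinearMap.coe_coe] at h
      rw [← h, hAb i, inner_smul_left]
      simp
    have step3 : ∀ i, ∑ j, (inner ℝ (b i) (e j) : ℝ)^2 = 1 := by
      intro i
      have h := e.sum_inner_mul_inner (b i) (b i)
      rw [real_inner_self_eq_norm_sq, hnb i] at h
      simp only [one_pow] at h
      rw [← h]
      refine Finset.sum_congr rfl fun j _ => ?_
      rw [real_inner_comm (e j), sq]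
    rw [step1]
    apply le_of_eq
    calc ∑ i, (γ i)^2 = ∑ i, (γ i)^2 * ∑ j, (inner ℝ (b i) (e j) : ℝ)^2 := by
          refine Finset.sum_congr rfl fun i _ => ?_
          rw [step3 i, mul_one]
      _ = ∑ i, ∑ j, ((γ i * inner ℝ (b i) (e j) : ℝ))^2 := by
          refine Finset.sum_congr rfl fun i _ => ?_
          rw [Finset.mul_sum]
          refine Finset.sum_congr rfl fun j _ => ?_
          ring
      _ = ∑ i, ∑ j, (inner ℝ (A (e j)) (b i) : ℝ)^2 := by
          refine Finset.sum_congr rfl fun i _ => ?_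
          refine Finset.sum_congr rfl fun j _ => ?_
          rw [step2]
      _ = ∑ j, ∑ i, (inner ℝ (A (e j)) (b i) : ℝ)^2 := Finset.sum_comm
  -- conclude
  rw [hdet, Real.log_prod (fun i _ => (hpos i).ne')]
  have hterm : ∀ i, ε * γ i - (ε * γ i)^2 ≤ Real.log (1 + ε * γ i) :=
    fun i => aux_log_one_add (habs i)
  calc ε * (LinearMap.trace ℝ E A.toLinearMap)
        - ε^2 * (∑ i, ∑ j, (A (EuclideanSpace.single j 1) i)^2)
      ≤ ε * (∑ i, γ i) - ε^2 * ∑ i, (γ i)^2 := by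
        rw [htr]
        have : ε^2 * (∑ i, (γ i)^2) ≤ ε^2 * ∑ i, ∑ j, (A (EuclideanSpace.single j 1) i)^2 :=
          mul_le_mul_of_nonneg_left hfrob (sq_nonneg ε)
        linarith
    _ = ∑ i, (ε * γ i - (ε * γ i)^2) := by
        rw [Finset.sum_sub_distrib, Finset.mul_sum, Finset.mul_sum]
        congr 1; congr 1; ext i; ring
    _ ≤ ∑ i, Real.log (1 + ε * γ i) := Finset.sum_le_sum fun i _ => hterm i

lemma aux_descent {d : ℕ} (f : EuclideanSpace ℝ (Fin d) → ℝ) (hf : ContDiff ℝ 1 f)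
    (L : ℝ) (hL : 0 ≤ L)
    (hlip : ∀ x y, ‖gradient f x - gradient f y‖ ≤ L * ‖x - y‖)
    (x v : EuclideanSpace ℝ (Fin d)) :
    f x - f (x + v) ≤ -(inner ℝ (gradient f x) v : ℝ) + L/2 * ‖v‖^2 := by
  have hdiff : Differentiable ℝ f := hf.differentiable one_ne_zero
  have hgrad : ∀ y w, (inner ℝ (gradient f y) w : ℝ) = fderiv ℝ f y w := by
    intro y w
    rw [gradient]
    exact InnerProductSpace.toDual_symm_apply
  -- the curve g t = f (x + t • v)
  have hcurve : ∀ t : ℝ, HasDerivAt (fun s : ℝ => x + s • v) v t := by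
    intro t
    simpa using ((hasDerivAt_id t).smul_const v).const_add x
  have hg : ∀ t : ℝ, HasDerivAt (fun s : ℝ => f (x + s • v)) (fderiv ℝ f (x + t • v) v) t := by
    intro t
    exact (hdiff (x + t • v)).hasFDerivAt.comp_hasDerivAt t (hcurve t)
  have hcont : Continuous fun t : ℝ => fderiv ℝ f (x + t • v) v := by
    have h1 : Continuous fun t : ℝ => x + t • v := by fun_prop
    exact ((hf.continuous_fderiv one_ne_zero).comp h1).clm_apply continuous_const
  have hFTC : f (x + v) - f x = ∫ t in (0:ℝ)..1, fderiv ℝ f (x + t • v) v := by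
    have := intervalIntegral.integral_eq_sub_of_hasDerivAt
      (f := fun s : ℝ => f (x + s • v)) (f' := fun t => fderiv ℝ f (x + t • v) v)
      (a := 0) (b := 1) (fun t _ => hg t) (hcont.intervalIntegrable 0 1)
    rw [this]
    simp
  have hbound : ∀ t ∈ Set.Icc (0:ℝ) 1,
      (inner ℝ (gradient f x) v : ℝ) - L * t * ‖v‖^2 ≤ fderiv ℝ f (x + t • v) v := by
    intro t ht
    rw [← hgrad]
    have h1 : (inner ℝ (gradient f x) v : ℝ) - inner ℝ (gradient f (x + t • v)) v
        = inner ℝ (gradient f x - gradient f (x + t • v)) v := by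
      rw [inner_sub_left]
    have h2 : (inner ℝ (gradient f x - gradient f (x + t • v)) v : ℝ)
        ≤ ‖gradient f x - gradient f (x + t • v)‖ * ‖v‖ := real_inner_le_norm _ _
    have h3 : ‖gradient f x - gradient f (x + t • v)‖ ≤ L * (t * ‖v‖) := by
      have := hlip x (x + t • v)
      have heq : x - (x + t • v) = -(t • v) := by abel
      rw [heq, norm_neg, norm_smul, Real.norm_eq_abs, abs_of_nonneg ht.1] at this
      exact this
    nlinarith [norm_nonneg v, mul_le_mul_of_nonneg_right h3 (norm_nonneg v)]
  have hlow : (inner ℝ (gradient f x) v : ℝ) - L/2 * ‖v‖^2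
      ≤ ∫ t in (0:ℝ)..1, fderiv ℝ f (x + t • v) v := by
    have hileft : (∫ t in (0:ℝ)..1, ((inner ℝ (gradient f x) v : ℝ) - L * t * ‖v‖^2))
        = (inner ℝ (gradient f x) v : ℝ) - L/2 * ‖v‖^2 := by
      rw [intervalIntegral.integral_sub intervalIntegrable_const
        (by apply Continuous.intervalIntegrable; fun_prop)]
      simp only [intervalIntegral.integral_const, smul_eq_mul]
      have : (∫ t in (0:ℝ)..1, L * t * ‖v‖^2)
          = L * ‖v‖^2 * ∫ t in (0:ℝ)..1, t := by
        rw [← intervalIntegral.integral_const_mul]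
        congr 1; ext t; ring
      rw [this, integral_id]
      ring
    rw [← hileft]
    apply intervalIntegral.integral_mono_on (by norm_num)
      (by apply Continuous.intervalIntegrable; fun_prop)
      (hcont.intervalIntegrable 0 1)
    exact hbound
  have := hFTC ▸ hlow
  linarith

set_option maxHeartbeats 2000000 in
/-- monotone decrease: under the setup of Statement 1, set
`S = ∫ (⟪∇ log p, φ⟫ + tr Dφ) q` and `R = ∫ ((L/2)‖φ‖² + ‖Dφ‖_F²) q`. If
`S ≥ 0` and `ε R ≤ S`, then one SVGD-type update does not increase the KL
divergence to the target: `KL(T#μ_q ‖ μ_p) ≤ KL(μ_q ‖ μ_p)`. -/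
theorem klDiv_pushforward_le_klDiv {d : ℕ}
    (q p : EuclideanSpace ℝ (Fin d) → ℝ)
    (hq_meas : Measurable q) (hq_nonneg : ∀ x, 0 ≤ q x)
    (hq_int : ∫ x, q x = 1)
    (hp_meas : Measurable p) (hp_pos : ∀ x, 0 < p x)
    (hp_int : ∫ x, p x = 1)
    (hlogp : ContDiff ℝ 2 (fun x => Real.log (p x)))
    (L : ℝ) (hL : 0 ≤ L)
    (hlip : ∀ x y : EuclideanSpace ℝ (Fin d),
      ‖gradient (fun z => Real.log (p z)) x
        - gradient (fun z => Real.log (p z)) y‖ ≤ L * ‖x - y‖)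
    (φ : EuclideanSpace ℝ (Fin d) → EuclideanSpace ℝ (Fin d))
    (hφ : ContDiff ℝ 1 φ) (ε : ℝ) (hε : 0 ≤ ε)
    (Sinv : EuclideanSpace ℝ (Fin d) → EuclideanSpace ℝ (Fin d))
    (hSinv : ContDiff ℝ 1 Sinv)
    (hST : Function.LeftInverse Sinv (fun lam => lam + ε • φ lam))
    (hTS : Function.RightInverse Sinv (fun lam => lam + ε • φ lam))
    (hsymm : ∀ lam, LinearMap.IsSymmetric
      ((fderiv ℝ φ lam : EuclideanSpace ℝ (Fin d) →L[ℝ]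
        EuclideanSpace ℝ (Fin d)).toLinearMap))
    (hop : ∀ lam : EuclideanSpace ℝ (Fin d), ε * ‖fderiv ℝ φ lam‖ ≤ 1 / 2)
    (hfin₁ : klDiv (densityMeasure q) (densityMeasure p) ≠ ⊤)
    (hfin₂ : klDiv ((densityMeasure q).map (fun lam => lam + ε • φ lam))
      (densityMeasure p) ≠ ⊤)
    (hint₁ : Integrable (fun lam =>
      ((inner ℝ (gradient (fun z => Real.log (p z)) lam) (φ lam) : ℝ)
        + LinearMap.trace ℝ (EuclideanSpace ℝ (Fin d))
            (fderiv ℝ φ lam).toLinearMap) * q lam))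
    (hint₂ : Integrable (fun lam =>
      (L / 2 * ‖φ lam‖ ^ 2 + jacobianFrobSq φ lam) * q lam))
    (S R : ℝ)
    (hSdef : S = ∫ lam,
      ((inner ℝ (gradient (fun z => Real.log (p z)) lam) (φ lam) : ℝ)
        + LinearMap.trace ℝ (EuclideanSpace ℝ (Fin d))
            (fderiv ℝ φ lam).toLinearMap) * q lam)
    (hRdef : R = ∫ lam,
      (L / 2 * ‖φ lam‖ ^ 2 + jacobianFrobSq φ lam) * q lam)
    (hS_nonneg : 0 ≤ S) (hεR : ε * R ≤ S) :
    klDiv ((densityMeasure q).map (fun lam => lam + ε • φ lam))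
        (densityMeasure p)
      ≤ klDiv (densityMeasure q) (densityMeasure p) := by
  set T : EuclideanSpace ℝ (Fin d) → EuclideanSpace ℝ (Fin d) :=
    fun lam => lam + ε • φ lam with hTdef
  set μ : Measure (EuclideanSpace ℝ (Fin d)) := densityMeasure q with hμdef
  set ν : Measure (EuclideanSpace ℝ (Fin d)) := densityMeasure p with hνdef
  -- basic analytic facts about T
  have hφdiff : Differentiable ℝ φ := hφ.differentiable one_ne_zero
  have hTcont : Continuous T := by
    apply continuous_id.add (hφ.continuous.const_smul ε)
  have hScont : Continuous Sinv := hSinv.continuous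
  have hTemb : MeasurableEmbedding T :=
    (Homeomorph.mk ⟨T, Sinv, hST, hTS⟩ hTcont hScont).measurableEmbedding
  have hTmeas : Measurable T := hTcont.measurable
  have hSmeas : Measurable Sinv := hScont.measurable
  set DT : EuclideanSpace ℝ (Fin d) →
      (EuclideanSpace ℝ (Fin d) →L[ℝ] EuclideanSpace ℝ (Fin d)) :=
    fun x => ContinuousLinearMap.id ℝ _ + ε • fderiv ℝ φ x with hDTdef
  have hDT : ∀ x, HasFDerivAt T (DT x) x := by
    intro x
    exact (hasFDerivAt_id x).add ((hφdiff x).hasFDerivAt.const_smul ε)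
  have hdet_pos : ∀ x, 0 < (DT x).det :=
    fun x => (aux_logdet (fderiv ℝ φ x) (hsymm x) ε hε (hop x)).1
  have hlogdet : ∀ x, ε * (LinearMap.trace ℝ _ (fderiv ℝ φ x).toLinearMap)
      - ε^2 * jacobianFrobSq φ x ≤ Real.log (DT x).det :=
    fun x => (aux_logdet (fderiv ℝ φ x) (hsymm x) ε hε (hop x)).2
  have hSdiff : ∀ y, HasFDerivAt Sinv (fderiv ℝ Sinv y) y :=
    fun y => (hSinv.differentiable one_ne_zero y).hasFDerivAt
  -- chain rule : det of inverse jacobian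
  have hchain : ∀ x, (fderiv ℝ Sinv (T x)).det * (DT x).det = 1 := by
    intro x
    have hcomp : HasFDerivAt (Sinv ∘ T) ((fderiv ℝ Sinv (T x)).comp (DT x)) x :=
      (hSdiff (T x)).comp x (hDT x)
    have hid : Sinv ∘ T = id := funext hST
    rw [hid] at hcomp
    have : (fderiv ℝ Sinv (T x)).comp (DT x) = ContinuousLinearMap.id ℝ _ :=
      hcomp.unique (hasFDerivAt_id x)
    have hdet := congrArg LinearMap.det (congrArg ContinuousLinearMap.toLinearMap this)
    rwa [ContinuousLinearMap.toLinearMap_comp, LinearMap.det_comp, ContinuousLinearMap.coe_id,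
      LinearMap.det_id] at hdet
  have hdetSinv : ∀ x, |(fderiv ℝ Sinv (T x)).det| = ((DT x).det)⁻¹ := by
    intro x
    have h1 := hchain x
    rw [eq_inv_of_mul_eq_one_left h1, abs_of_pos (inv_pos.mpr (hdet_pos x))]
  -- measure theory setup
  have hμac : μ ≪ (volume : Measure (EuclideanSpace ℝ (Fin d))) := by
    rw [hμdef]; unfold densityMeasure; exact withDensity_absolutelyContinuous _ _
  haveI : SigmaFinite μ := by
    rw [hμdef]; unfold densityMeasure; infer_instance
  haveI : SigmaFinite ν := by
    rw [hνdef]; unfold densityMeasure; infer_instance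
  set w : EuclideanSpace ℝ (Fin d) → ℝ≥0∞ :=
    fun y => ENNReal.ofReal |(fderiv ℝ Sinv y).det| with hwdef
  have hw_meas : Measurable w := by
    apply ENNReal.measurable_ofReal.comp
    exact (ContinuousLinearMap.continuous_det.comp
      (hSinv.continuous_fderiv one_ne_zero)).abs.measurable
  have hSsurj : Function.Surjective Sinv := fun x => ⟨T x, hST x⟩
  have hSinj : Function.Injective Sinv := fun a b h => by
    rw [← hTS a, h, hTS b]
  have hmapSinv : Measure.map Sinv (volume.withDensity w) = volume := by
    have h := map_withDensity_abs_det_fderiv_eq_addHaar (volume)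
      (MeasurableSet.univ (α := EuclideanSpace ℝ (Fin d))) (fun x _ => (hSdiff x).hasFDerivWithinAt)
      (hSinj.injOn)
    simpa [Set.image_univ, hSsurj.range_eq] using h
  have hmapTvol : Measure.map T volume = volume.withDensity w := by
    have h1 := congrArg (Measure.map T) hmapSinv
    rw [Measure.map_map hTmeas hSmeas, hTS.comp_eq_id, Measure.map_id] at h1
    exact h1.symm
  have hq_meas' : Measurable fun x => ENNReal.ofReal (q x) :=
    ENNReal.measurable_ofReal.comp hq_meas
  have hp_meas' : Measurable fun x => ENNReal.ofReal (p x) :=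
    ENNReal.measurable_ofReal.comp hp_meas
  have hg_meas : Measurable fun y => ENNReal.ofReal (q (Sinv y)) :=
    hq_meas'.comp hSmeas
  set ρ : EuclideanSpace ℝ (Fin d) → ℝ≥0∞ :=
    fun y => w y * ENNReal.ofReal (q (Sinv y)) with hρdef
  have hρ_meas : Measurable ρ := hw_meas.mul hg_meas
  set μ' := Measure.map T μ with hμ'def
  have hmapμ : μ' = volume.withDensity ρ := by
    have step : μ' = (Measure.map T volume).withDensity
        (fun y => ENNReal.ofReal (q (Sinv y))) := by
      ext s hs
      calc μ' s = ∫⁻ x in T ⁻¹' s, ENNReal.ofReal (q x) := by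
            rw [hμ'def, Measure.map_apply hTmeas hs, hμdef]
            unfold densityMeasure
            rw [withDensity_apply _ (hTmeas hs)]
        _ = ∫⁻ x in T ⁻¹' s, ENNReal.ofReal (q (Sinv (T x))) := by
            apply lintegral_congr; intro x; rw [hST x]
        _ = ∫⁻ y in s, ENNReal.ofReal (q (Sinv y)) ∂(Measure.map T volume) :=
            (setLIntegral_map hs hg_meas hTmeas).symm
        _ = ((Measure.map T volume).withDensity
              (fun y => ENNReal.ofReal (q (Sinv y)))) s := (withDensity_apply _ hs).symm
    rw [step, hmapTvol, ← withDensity_mul _ hw_meas hg_meas]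
    rfl
  haveI : SigmaFinite μ' := by
    rw [hmapμ]
    exact SigmaFinite.withDensity_of_ne_top' fun x =>
      ENNReal.mul_ne_top ENNReal.ofReal_ne_top ENNReal.ofReal_ne_top
  have hμ'ac : μ' ≪ (volume : Measure (EuclideanSpace ℝ (Fin d))) := by
    rw [hmapμ]; exact withDensity_absolutelyContinuous _ _
  -- Radon-Nikodym derivatives
  have hp_ne0 : ∀ᵐ x ∂(volume : Measure (EuclideanSpace ℝ (Fin d))),
      ENNReal.ofReal (p x) ≠ 0 := ae_of_all _ fun x => by
    simp [ENNReal.ofReal_eq_zero, not_le, hp_pos x]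
  have hp_netop : ∀ᵐ x ∂(volume : Measure (EuclideanSpace ℝ (Fin d))),
      ENNReal.ofReal (p x) ≠ ⊤ := ae_of_all _ fun x => ENNReal.ofReal_ne_top
  have hrn_μ : μ.rnDeriv volume =ᵐ[volume] fun x => ENNReal.ofReal (q x) := by
    rw [hμdef]; unfold densityMeasure
    exact Measure.rnDeriv_withDensity volume hq_meas'
  have hrn_old : μ.rnDeriv ν =ᵐ[volume]
      fun x => (ENNReal.ofReal (p x))⁻¹ * ENNReal.ofReal (q x) := by
    have h1 : μ.rnDeriv ν =ᵐ[volume]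
        fun x => (ENNReal.ofReal (p x))⁻¹ * μ.rnDeriv volume x := by
      rw [hνdef]; unfold densityMeasure
      exact Measure.rnDeriv_withDensity_right μ volume hp_meas'.aemeasurable hp_ne0 hp_netop
    filter_upwards [h1, hrn_μ] with x hx1 hx2
    rw [hx1, hx2]
  have hrn_μ' : μ'.rnDeriv volume =ᵐ[volume] ρ := by
    rw [hmapμ]; exact Measure.rnDeriv_withDensity volume hρ_meas
  have hrn_new : μ'.rnDeriv ν =ᵐ[volume]
      fun y => (ENNReal.ofReal (p y))⁻¹ * ρ y := by
    have h1 : μ'.rnDeriv ν =ᵐ[volume]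
        fun y => (ENNReal.ofReal (p y))⁻¹ * μ'.rnDeriv volume y := by
      rw [hνdef]; unfold densityMeasure
      exact Measure.rnDeriv_withDensity_right μ' volume hp_meas'.aemeasurable hp_ne0 hp_netop
    filter_upwards [h1, hrn_μ'] with y hy1 hy2
    rw [hy1, hy2]
  -- a.e. positivity of q under μ
  have hqpos : ∀ᵐ x ∂μ, 0 < q x := by
    rw [hμdef]; unfold densityMeasure
    rw [ae_iff]
    have hset : {x | ¬ 0 < q x} = {x | q x ≤ 0} := by ext x; simp [not_lt]
    have hsm : MeasurableSet {x : EuclideanSpace ℝ (Fin d) | q x ≤ 0} :=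
      measurableSet_le hq_meas measurable_const
    rw [hset, withDensity_apply _ hsm]
    have h0 : ∫⁻ x in {x | q x ≤ 0}, ENNReal.ofReal (q x)
        = ∫⁻ x in {x : EuclideanSpace ℝ (Fin d) | q x ≤ 0}, (0:ℝ≥0∞) := by
      apply setLIntegral_congr_fun hsm
      intro x hx
      simpa only [ENNReal.ofReal_eq_zero, Set.mem_setOf_eq] using hx
    rw [h0, lintegral_zero]
  -- llr identities
  have h₂ : llr μ ν =ᵐ[μ] fun x => Real.log (q x) - Real.log (p x) := by
    filter_upwards [hμac.ae_eq hrn_old, hqpos] with x hx hqx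
    rw [show llr μ ν x = Real.log (μ.rnDeriv ν x).toReal from rfl, hx, ENNReal.toReal_mul, ENNReal.toReal_inv,
      ENNReal.toReal_ofReal (hp_pos x).le, ENNReal.toReal_ofReal (hq_nonneg x),
      Real.log_mul (inv_ne_zero (hp_pos x).ne') hqx.ne', Real.log_inv]
    ring
  have h₁ : (fun x => llr μ' ν (T x)) =ᵐ[μ]
      fun x => Real.log (q x) - Real.log ((DT x).det) - Real.log (p (T x)) := by
    have hae : ∀ᵐ y ∂μ', llr μ' ν y
        = Real.log (((ENNReal.ofReal (p y))⁻¹ * ρ y).toReal) := by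
      filter_upwards [hμ'ac.ae_eq hrn_new] with y hy
      rw [show llr μ' ν y = Real.log (μ'.rnDeriv ν y).toReal from rfl, hy]
    rw [hμ'def, hTemb.ae_map_iff] at hae
    filter_upwards [hae, hqpos] with x hx hqx
    have hd := hdet_pos x
    have hp' := hp_pos (T x)
    rw [hx]
    have hρTx : ρ (T x) = ENNReal.ofReal (((DT x).det)⁻¹) * ENNReal.ofReal (q x) := by
      simp only [hρdef, hwdef]
      rw [hST x, hdetSinv x]
    rw [hρTx, ENNReal.toReal_mul, ENNReal.toReal_mul, ENNReal.toReal_inv,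
      ENNReal.toReal_ofReal hp'.le, ENNReal.toReal_ofReal (inv_nonneg.mpr hd.le),
      ENNReal.toReal_ofReal (hq_nonneg x),
      Real.log_mul (inv_ne_zero hp'.ne') (mul_pos (inv_pos.mpr hd) hqx).ne',
      Real.log_mul (inv_ne_zero hd.ne') hqx.ne', Real.log_inv, Real.log_inv]
    ring
  -- klDiv conditions
  have c₁ : μ ≪ ν ∧ Integrable (llr μ ν) μ := by
    by_contra h; exact hfin₁ (by rw [klDiv, if_neg h])
  have c₂ : μ' ≪ ν ∧ Integrable (llr μ' ν) μ' := by
    by_contra h; exact hfin₂ (by rw [klDiv, if_neg h])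
  -- integrable representatives
  have hIF₁pre : Integrable (fun x => llr μ' ν (T x)) μ := by
    have h := c₂.2
    rw [hμ'def] at h
    exact hTemb.integrable_map_iff.mp h
  have hIF₁ : Integrable
      (fun x => Real.log (q x) - Real.log ((DT x).det) - Real.log (p (T x))) μ :=
    hIF₁pre.congr h₁
  have hIF₂ : Integrable (fun x => Real.log (q x) - Real.log (p x)) μ :=
    c₁.2.congr h₂
  have hval₁ : ∫ y, llr μ' ν y ∂μ'
      = ∫ x, (Real.log (q x) - Real.log ((DT x).det) - Real.log (p (T x))) ∂μ := by
    rw [hμ'def, hTemb.integral_map]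
    exact integral_congr_ae h₁
  have hval₂ : ∫ x, llr μ ν x ∂μ = ∫ x, (Real.log (q x) - Real.log (p x)) ∂μ :=
    integral_congr_ae h₂
  -- the pointwise inequality
  have hlogp1 : ContDiff ℝ 1 (fun x => Real.log (p x)) := hlogp.of_le one_le_two
  have hpt : ∀ x, (Real.log (q x) - Real.log ((DT x).det) - Real.log (p (T x)))
      - (Real.log (q x) - Real.log (p x))
      ≤ -ε * ((inner ℝ (gradient (fun z => Real.log (p z)) x) (φ x) : ℝ)
            + LinearMap.trace ℝ (EuclideanSpace ℝ (Fin d)) (fderiv ℝ φ x).toLinearMap)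
        + ε^2 * (L / 2 * ‖φ x‖ ^ 2 + jacobianFrobSq φ x) := by
    intro x
    have hd := aux_descent _ hlogp1 L hL hlip x (ε • φ x)
    rw [inner_smul_right, norm_smul, Real.norm_eq_abs, abs_of_nonneg hε, mul_pow] at hd
    have hld := hlogdet x
    have hTx : T x = x + ε • φ x := rfl
    rw [← hTx] at hd
    nlinarith [hd, hld, sq_nonneg ε]
  -- integrability of the right-hand side over μ
  have hflt : ∀ᵐ x ∂(volume : Measure (EuclideanSpace ℝ (Fin d))),
      ENNReal.ofReal (q x) < ⊤ := ae_of_all _ fun x => ENNReal.ofReal_lt_top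
  have hμ_wd : μ = volume.withDensity fun x => ENNReal.ofReal (q x) := by
    rw [hμdef]; rfl
  have hG₁ : Integrable (fun x => (inner ℝ (gradient (fun z => Real.log (p z)) x) (φ x) : ℝ)
      + LinearMap.trace ℝ (EuclideanSpace ℝ (Fin d)) (fderiv ℝ φ x).toLinearMap) μ := by
    rw [hμ_wd, integrable_withDensity_iff hq_meas' hflt]
    apply hint₁.congr
    exact ae_of_all _ fun x => by simp [ENNReal.toReal_ofReal (hq_nonneg x)]
  have hG₂ : Integrable (fun x => L / 2 * ‖φ x‖ ^ 2 + jacobianFrobSq φ x) μ := by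
    rw [hμ_wd, integrable_withDensity_iff hq_meas' hflt]
    apply hint₂.congr
    exact ae_of_all _ fun x => by simp [ENNReal.toReal_ofReal (hq_nonneg x)]
  have hG : Integrable (fun x =>
      -ε * ((inner ℝ (gradient (fun z => Real.log (p z)) x) (φ x) : ℝ)
          + LinearMap.trace ℝ (EuclideanSpace ℝ (Fin d)) (fderiv ℝ φ x).toLinearMap)
      + ε^2 * (L / 2 * ‖φ x‖ ^ 2 + jacobianFrobSq φ x)) μ :=
    (hG₁.const_mul _).add (hG₂.const_mul _)
  have hmono : ∫ x, ((Real.log (q x) - Real.log ((DT x).det) - Real.log (p (T x)))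
        - (Real.log (q x) - Real.log (p x))) ∂μ
      ≤ ∫ x, (-ε * ((inner ℝ (gradient (fun z => Real.log (p z)) x) (φ x) : ℝ)
          + LinearMap.trace ℝ (EuclideanSpace ℝ (Fin d)) (fderiv ℝ φ x).toLinearMap)
        + ε^2 * (L / 2 * ‖φ x‖ ^ 2 + jacobianFrobSq φ x)) ∂μ :=
    integral_mono (hIF₁.sub hIF₂) hG hpt
  -- computing S and R as integrals over μ
  have hSval : ∫ x, ((inner ℝ (gradient (fun z => Real.log (p z)) x) (φ x) : ℝ)
      + LinearMap.trace ℝ (EuclideanSpace ℝ (Fin d)) (fderiv ℝ φ x).toLinearMap) ∂μ = S := by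
    rw [hSdef, hμ_wd]
    rw [show (fun x => ENNReal.ofReal (q x))
      = (fun x => ((q x).toNNReal : ℝ≥0∞)) from rfl]
    rw [integral_withDensity_eq_integral_smul (show Measurable (fun x => (q x).toNNReal) from measurable_real_toNNReal.comp hq_meas)]
    apply integral_congr_ae
    exact ae_of_all _ fun x => by
      simp only [NNReal.smul_def, Real.coe_toNNReal _ (hq_nonneg x), smul_eq_mul]
      ring
  have hRval : ∫ x, (L / 2 * ‖φ x‖ ^ 2 + jacobianFrobSq φ x) ∂μ = R := by
    rw [hRdef, hμ_wd]
    rw [show (fun x => ENNReal.ofReal (q x))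
      = (fun x => ((q x).toNNReal : ℝ≥0∞)) from rfl]
    rw [integral_withDensity_eq_integral_smul (show Measurable (fun x => (q x).toNNReal) from measurable_real_toNNReal.comp hq_meas)]
    apply integral_congr_ae
    exact ae_of_all _ fun x => by
      simp only [NNReal.smul_def, Real.coe_toNNReal _ (hq_nonneg x), smul_eq_mul]
      ring
  have hbound : ∫ x, (-ε * ((inner ℝ (gradient (fun z => Real.log (p z)) x) (φ x) : ℝ)
        + LinearMap.trace ℝ (EuclideanSpace ℝ (Fin d)) (fderiv ℝ φ x).toLinearMap)
      + ε^2 * (L / 2 * ‖φ x‖ ^ 2 + jacobianFrobSq φ x)) ∂μ ≤ 0 := by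
    rw [integral_add (hG₁.const_mul _) (hG₂.const_mul _),
      integral_const_mul, integral_const_mul, hSval, hRval]
    nlinarith [mul_le_mul_of_nonneg_left hεR hε]
  have hsub : ∫ x, ((Real.log (q x) - Real.log ((DT x).det) - Real.log (p (T x)))
        - (Real.log (q x) - Real.log (p x))) ∂μ
      = (∫ x, (Real.log (q x) - Real.log ((DT x).det) - Real.log (p (T x))) ∂μ)
        - ∫ x, (Real.log (q x) - Real.log (p x)) ∂μ := integral_sub hIF₁ hIF₂
  -- final conclusion
  rw [klDiv, if_pos c₂, klDiv, if_pos c₁]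
  apply EReal.coe_le_coe_iff.mpr
  rw [hval₁, hval₂]
  linarith [hmono, hbound, hsub]
end

section
/- Let q : ℝ^d → ℝ be an everywhere positive probability density with respect to Lebesgue measure and let p : ℝ^d → ℝ be an everywhere positive continuous probability density. Let T : ℝ^d → ℝ^d be a C¹ diffeomorphism with Jacobian matrix DT(λ) at λ. Assume KL(μ_q ‖ μ_p) and KL(T#μ_q ‖ μ_p) are finite and that λ ↦ (log p(λ) − log p(T(λ)) − log |det DT(λ)|) q(λ) is Lebesgue integrable. Then KL(T#μ_q ‖ μ_p) − KL(μ_q ‖ μ_p) = ∫ ( log p(λ) − log p(T(λ)) − log |det DT(λ)| ) q(λ) dλ. -/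
open MeasureTheory
open scoped Classical ENNReal NNReal

/-- For an everywhere positive probability density `q`, an
everywhere positive continuous probability density `p`, and a `C¹`
diffeomorphism `T` of `ℝ^d` (with `C¹` inverse `S`), assuming finiteness of
the KL divergences and integrability of the integrand,
`KL(T#μ_q ‖ μ_p) − KL(μ_q ‖ μ_p)
  = ∫ (log p(λ) − log p(T λ) − log |det DT(λ)|) q(λ) dλ`. -/
theorem klDiv_pushforward_sub_klDiv_eq {d : ℕ}
    (q p : EuclideanSpace ℝ (Fin d) → ℝ)
    (hq_meas : Measurable q) (hq_pos : ∀ x, 0 < q x)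
    (hq_int : ∫ x, q x = 1)
    (hp_cont : Continuous p) (hp_pos : ∀ x, 0 < p x)
    (hp_int : ∫ x, p x = 1)
    (T S : EuclideanSpace ℝ (Fin d) → EuclideanSpace ℝ (Fin d))
    (hT : ContDiff ℝ 1 T) (hS : ContDiff ℝ 1 S)
    (hST : Function.LeftInverse S T) (hTS : Function.RightInverse S T)
    (hfin₁ : klDiv (densityMeasure q) (densityMeasure p) ≠ ⊤)
    (hfin₂ : klDiv ((densityMeasure q).map T) (densityMeasure p) ≠ ⊤)
    (hint : Integrable (fun lam =>
      (Real.log (p lam) - Real.log (p (T lam))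
        - Real.log |(fderiv ℝ T lam).det|) * q lam)) :
    (klDiv ((densityMeasure q).map T) (densityMeasure p)).toReal
        - (klDiv (densityMeasure q) (densityMeasure p)).toReal
      = ∫ lam, (Real.log (p lam) - Real.log (p (T lam))
          - Real.log |(fderiv ℝ T lam).det|) * q lam := by
  set μq := densityMeasure q with hμq
  set μp := densityMeasure p with hμp
  set μT := μq.map T with hμT
  have hq_integ : Integrable q := integrable_of_integral_eq_one hq_int
  have hp_integ : Integrable p := integrable_of_integral_eq_one hp_int
  have hTmeas : Measurable T := hT.continuous.measurable
  have hSmeas : Measurable S := hS.continuous.measurable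
  have hTdiff : Differentiable ℝ T := hT.differentiable one_ne_zero
  have hSdiff : Differentiable ℝ S := hS.differentiable one_ne_zero
  -- determinant facts
  have hchain : ∀ lam, (fderiv ℝ S (T lam)).det * (fderiv ℝ T lam).det = 1 := by
    intro lam
    have h1 : fderiv ℝ (S ∘ T) lam = (fderiv ℝ S (T lam)).comp (fderiv ℝ T lam) :=
      fderiv_comp lam (hSdiff _) (hTdiff _)
    have h2 : (S ∘ T) = id := funext fun x => hST x
    rw [h2, fderiv_id] at h1
    have := congrArg ContinuousLinearMap.det h1.symm
    simpa [ContinuousLinearMap.det, ContinuousLinearMap.coe_comp, LinearMap.det_comp] using this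
  have hdetT_ne : ∀ lam, (fderiv ℝ T lam).det ≠ 0 := fun lam h => by
    have := hchain lam; rw [h, mul_zero] at this; exact zero_ne_one this
  have hdetS_eq : ∀ lam, (fderiv ℝ S (T lam)).det = ((fderiv ℝ T lam).det)⁻¹ := fun lam =>
    eq_inv_of_mul_eq_one_left (hchain lam)
  have hchain2 : ∀ y, (fderiv ℝ T (S y)).det * (fderiv ℝ S y).det = 1 := by
    intro y
    have h1 : fderiv ℝ (T ∘ S) y = (fderiv ℝ T (S y)).comp (fderiv ℝ S y) :=
      fderiv_comp y (hTdiff _) (hSdiff _)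
    have h2 : (T ∘ S) = id := funext fun x => hTS x
    rw [h2, fderiv_id] at h1
    have := congrArg ContinuousLinearMap.det h1.symm
    simpa [ContinuousLinearMap.det, ContinuousLinearMap.coe_comp, LinearMap.det_comp] using this
  have hdetS_ne : ∀ y, (fderiv ℝ S y).det ≠ 0 := fun y h => by
    have := hchain2 y; rw [h, mul_zero] at this; exact zero_ne_one this
  -- the pushforward density
  set g : EuclideanSpace ℝ (Fin d) → ℝ := fun y => q (S y) * |(fderiv ℝ S y).det| with hg
  have hdetS_cont : Continuous fun y => |(fderiv ℝ S y).det| :=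
    (ContinuousLinearMap.continuous_det.comp (hS.continuous_fderiv one_ne_zero)).abs
  have hg_meas : Measurable g := (hq_meas.comp hSmeas).mul hdetS_cont.measurable
  have hg_pos : ∀ y, 0 < g y := fun y =>
    mul_pos (hq_pos _) (abs_pos.mpr (hdetS_ne y))
  -- μT = densityMeasure g
  have hμT_eq : μT = densityMeasure g := by
    ext s hs
    have hpre : T ⁻¹' s = S '' s := by
      ext x
      constructor
      · intro hx; exact ⟨T x, hx, hST x⟩
      · rintro ⟨y, hy, rfl⟩; simpa [hTS y] using hy
    rw [hμT, Measure.map_apply hTmeas hs, hμq, densityMeasure, densityMeasure,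
      withDensity_apply _ (hTmeas hs), withDensity_apply _ hs, hpre]
    rw [lintegral_image_eq_lintegral_abs_det_fderiv_mul volume hs
      (fun y _ => ((hSdiff y).hasFDerivAt).hasFDerivWithinAt) hTS.injective.injOn
      (fun x => ENNReal.ofReal (q x))]
    refine setLIntegral_congr_fun hs (fun y _ => ?_)
    rw [hg, ← ENNReal.ofReal_mul (abs_nonneg _), mul_comm]
  -- probability measure instances
  have instμq : IsProbabilityMeasure μq := by
    constructor
    rw [hμq, densityMeasure, withDensity_apply _ MeasurableSet.univ,
      Measure.restrict_univ,
      ← ofReal_integral_eq_lintegral_ofReal hq_integ (ae_of_all _ fun x => (hq_pos x).le),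
      hq_int, ENNReal.ofReal_one]
  have instμp : IsProbabilityMeasure μp := by
    constructor
    rw [hμp, densityMeasure, withDensity_apply _ MeasurableSet.univ,
      Measure.restrict_univ,
      ← ofReal_integral_eq_lintegral_ofReal hp_integ (ae_of_all _ fun x => (hp_pos x).le),
      hp_int, ENNReal.ofReal_one]
  have instμT : IsProbabilityMeasure μT := Measure.isProbabilityMeasure_map hTmeas.aemeasurable
  -- Radon–Nikodym derivatives
  have hp_ae_ne_zero : ∀ᵐ x ∂(volume : Measure (EuclideanSpace ℝ (Fin d))),
      ENNReal.ofReal (p x) ≠ 0 :=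
    ae_of_all _ fun x => by simp [ENNReal.ofReal_eq_zero, not_le, hp_pos x]
  have hp_ae_ne_top : ∀ᵐ x ∂(volume : Measure (EuclideanSpace ℝ (Fin d))),
      ENNReal.ofReal (p x) ≠ ⊤ := ae_of_all _ fun x => ENNReal.ofReal_ne_top
  have hrn_aux : ∀ (f : EuclideanSpace ℝ (Fin d) → ℝ), Measurable f →
      ∀ [SigmaFinite (densityMeasure f)],
      (densityMeasure f).rnDeriv μp =ᵐ[volume]
        fun x => (ENNReal.ofReal (p x))⁻¹ * ENNReal.ofReal (f x) := by
    intro f hf _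
    have h1 := Measure.rnDeriv_withDensity_right (densityMeasure f) volume
      (hp_cont.measurable.ennreal_ofReal).aemeasurable hp_ae_ne_zero hp_ae_ne_top
    have h2 : (densityMeasure f).rnDeriv volume =ᵐ[volume]
        fun x => ENNReal.ofReal (f x) :=
      Measure.rnDeriv_withDensity volume (hf.ennreal_ofReal)
    filter_upwards [h1, h2] with x hx1 hx2
    simp only [hμp, densityMeasure] at hx1 hx2 ⊢
    rw [hx1, hx2]
  have instg : SigmaFinite (densityMeasure g) := by
    rw [← hμT_eq]; infer_instance
  have hrn_q := hrn_aux q hq_meas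
  have hrn_g := hrn_aux g hg_meas
  -- llr formulas, a.e. with respect to volume
  have hllr_q : llr μq μp =ᵐ[volume] fun x => Real.log (q x) - Real.log (p x) := by
    filter_upwards [hrn_q] with x hx
    rw [llr, hμq, densityMeasure] at *
    rw [hx, ENNReal.toReal_mul, ENNReal.toReal_inv, ENNReal.toReal_ofReal (hp_pos x).le,
      ENNReal.toReal_ofReal (hq_pos x).le,
      Real.log_mul (inv_ne_zero (hp_pos x).ne') (hq_pos x).ne', Real.log_inv]
    ring
  have hllr_T : llr μT μp =ᵐ[volume] fun y => Real.log (g y) - Real.log (p y) := by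
    filter_upwards [hrn_g] with y hy
    rw [llr, hμT_eq]
    rw [hy, ENNReal.toReal_mul, ENNReal.toReal_inv, ENNReal.toReal_ofReal (hp_pos y).le,
      ENNReal.toReal_ofReal (hg_pos y).le,
      Real.log_mul (inv_ne_zero (hp_pos y).ne') (hg_pos y).ne', Real.log_inv]
    ring
  -- extract the finite values of the KL divergences
  have hc₁ : μq ≪ μp ∧ Integrable (llr μq μp) μq := by
    by_contra h; exact hfin₁ (by rw [klDiv, if_neg h])
  have hc₂ : μT ≪ μp ∧ Integrable (llr μT μp) μT := by
    by_contra h; exact hfin₂ (by rw [klDiv, if_neg h])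
  have hval₁ : (klDiv μq μp).toReal = ∫ x, llr μq μp x ∂μq := by
    rw [klDiv, if_pos hc₁]; simp
  have hval₂ : (klDiv μT μp).toReal = ∫ x, llr μT μp x ∂μT := by
    rw [klDiv, if_pos hc₂]; simp
  -- rewrite the pushforward integral as an integral over μq
  have hmap : ∫ y, llr μT μp y ∂μT = ∫ lam, llr μT μp (T lam) ∂μq :=
    integral_map hTmeas.aemeasurable hc₂.2.1
  have hint_comp : Integrable (fun lam => llr μT μp (T lam)) μq := by
    have := (integrable_map_measure hc₂.2.1 hTmeas.aemeasurable).mp hc₂.2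
    exact this
  have hac_q : μq ≪ (volume : Measure (EuclideanSpace ℝ (Fin d))) :=
    withDensity_absolutelyContinuous _ _
  have hac_T : μT ≪ (volume : Measure (EuclideanSpace ℝ (Fin d))) := by
    rw [hμT_eq]; exact withDensity_absolutelyContinuous _ _
  -- the a.e. identity for the difference
  have hdiff_ae : (fun lam => llr μT μp (T lam) - llr μq μp lam) =ᵐ[μq]
      fun lam => (Real.log (p lam) - Real.log (p (T lam))
        - Real.log |(fderiv ℝ T lam).det|) * q lam / q lam := by
    have e1 : llr μq μp =ᵐ[μq] fun x => Real.log (q x) - Real.log (p x) :=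
      hac_q.ae_eq hllr_q
    have e2 : ∀ᵐ lam ∂μq, llr μT μp (T lam)
        = Real.log (g (T lam)) - Real.log (p (T lam)) :=
      ae_of_ae_map hTmeas.aemeasurable (hac_T.ae_eq hllr_T)
    filter_upwards [e1, e2] with lam h1 h2
    rw [h1, h2, mul_div_assoc, div_self (hq_pos lam).ne', mul_one]
    have hglam : g (T lam) = q lam * |(fderiv ℝ T lam).det|⁻¹ := by
      rw [hg]
      simp only [hST lam, hdetS_eq lam, abs_inv]
    rw [hglam, Real.log_mul (hq_pos lam).ne'
      (inv_ne_zero (abs_ne_zero.mpr (hdetT_ne lam))), Real.log_inv]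
    ring
  -- put everything together
  rw [hval₁, hval₂, hmap, ← integral_sub hint_comp hc₁.2, integral_congr_ae hdiff_ae]
  -- convert the μq-integral to a volume integral
  have hμq_wd : μq = volume.withDensity fun x => ((q x).toNNReal : ℝ≥0∞) := rfl
  rw [hμq_wd, integral_withDensity_eq_integral_smul hq_meas.real_toNNReal]
  refine integral_congr_ae (ae_of_all _ fun lam => ?_)
  simp only [NNReal.smul_def, Real.coe_toNNReal _ (hq_pos lam).le, smul_eq_mul]
  rw [mul_div_assoc, div_self (hq_pos lam).ne', mul_one]
  ring
end

section
/- Let B be a real symmetric d × d matrix and let ε ≥ 0 be such that every eigenvalue μ of ε B satisfies μ ≥ −1/2 (for instance, ε ‖B‖_op ≤ 1/2 suffices). Then the matrix I + ε B is positive definite and log det(I + ε B) ≥ ε trace(B) − ε² ‖B‖_F², where ‖B‖_F denotes the Frobenius norm of B. -/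
open Matrix

private lemma log_one_add_ge_aux (x : ℝ) (hx : -(1/2) ≤ x) :
    x - x ^ 2 ≤ Real.log (1 + x) := by
  have hx1 : (0:ℝ) < 1 + x := by linarith
  rcases le_or_gt 0 x with h0 | h0
  · rw [Real.le_log_iff_exp_le hx1]
    have h1 := Real.add_one_le_exp (x ^ 2 - x)
    have h2 : Real.exp (x - x ^ 2) * Real.exp (x ^ 2 - x) = 1 := by
      rw [← Real.exp_add]; ring_nf; exact Real.exp_zero
    nlinarith [Real.exp_pos (x ^ 2 - x), Real.exp_pos (x - x ^ 2),
      pow_nonneg h0 3]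
  · set f : ℝ → ℝ := fun y => Real.log (1 + y) - (y - y ^ 2) with hf
    have hder : ∀ y ∈ Set.Ioo (-(1/2):ℝ) 0,
        HasDerivAt f ((1 + y)⁻¹ - (1 - 2 * y)) y := by
      intro y hy
      have hy1 : (0:ℝ) < 1 + y := by have := hy.1; linarith
      have h1 : HasDerivAt (fun y : ℝ => 1 + y) 1 y := by
        simpa using (hasDerivAt_id y).const_add 1
      have h2 : HasDerivAt (fun y : ℝ => Real.log (1 + y)) ((1 + y)⁻¹ * 1) y :=
        (Real.hasDerivAt_log hy1.ne').comp y h1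
      have h3 : HasDerivAt (fun y : ℝ => y - y ^ 2) (1 - 2 * y) y := by
        simpa using (hasDerivAt_id y).fun_sub (hasDerivAt_pow 2 y)
      simpa using h2.fun_sub h3
    have hcont : ContinuousOn f (Set.Icc (-(1/2):ℝ) 0) := by
      apply ContinuousOn.sub
      · apply ContinuousOn.log (by fun_prop)
        intro y hy
        have := hy.1
        have : (0:ℝ) < 1 + y := by linarith
        exact this.ne'
      · fun_prop
    have hanti : AntitoneOn f (Set.Icc (-(1/2):ℝ) 0) := by
      apply antitoneOn_of_deriv_nonpos (convex_Icc _ _) hcont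
      · intro y hy
        rw [interior_Icc] at hy
        exact (hder y hy).differentiableAt.differentiableWithinAt
      · intro y hy
        rw [interior_Icc] at hy
        rw [(hder y hy).deriv]
        have hy1 : (0:ℝ) < 1 + y := by have := hy.1; linarith
        have h4 : (1 + y) * (1 + y)⁻¹ = 1 := mul_inv_cancel₀ hy1.ne'
        have h5 : (0:ℝ) ≤ (1 + y)⁻¹ := inv_nonneg.mpr hy1.le
        nlinarith [hy.1, hy.2]
    have h6 : f 0 ≤ f x := by
      apply hanti ⟨hx, h0.le⟩ ⟨by norm_num, le_refl 0⟩ h0.le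
    simp only [hf] at h6
    simp only [add_zero, Real.log_one] at h6
    linarith
/-- Let `B` be a real symmetric `d × d` matrix and `ε ≥ 0` be such
that every (real) eigenvalue `μ` of `ε • B` satisfies `μ ≥ -1/2`. Then
`I + ε • B` is positive definite and
`log det (I + ε • B) ≥ ε * trace B - ε² * ‖B‖_F²`, where `‖B‖_F` is the
Frobenius norm of `B`. -/
theorem log_det_one_add_smul_ge {d : ℕ} (B : Matrix (Fin d) (Fin d) ℝ)
    (hsymm : B.IsSymm) (ε : ℝ) (hε : 0 ≤ ε)
    (heig : ∀ μ ∈ spectrum ℝ (ε • B), -(1/2) ≤ μ) :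
    ((1 : Matrix (Fin d) (Fin d) ℝ) + ε • B).PosDef ∧
    Real.log ((1 : Matrix (Fin d) (Fin d) ℝ) + ε • B).det ≥
      ε * B.trace - ε ^ 2 * (∑ i, ∑ j, (B i j) ^ 2) := by
  classical
  have hAh : (ε • B).IsHermitian := by
    rw [Matrix.IsHermitian, conjTranspose_eq_transpose_of_trivial, transpose_smul, hsymm]
  set μ : Fin d → ℝ := hAh.eigenvalues with hμdef
  have hμ : ∀ i, -(1/2) ≤ μ i := fun i => heig _ (hAh.eigenvalues_mem_spectrum_real i)
  set U : Matrix (Fin d) (Fin d) ℝ := (hAh.eigenvectorUnitary : Matrix (Fin d) (Fin d) ℝ)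
    with hUdef
  have hUU : U * star U = 1 := (Matrix.mem_unitaryGroup_iff).mp hAh.eigenvectorUnitary.2
  have hUU' : star U * U = 1 := (Matrix.mem_unitaryGroup_iff').mp hAh.eigenvectorUnitary.2
  have hspec : ε • B = U * Matrix.diagonal μ * star U := by
    have := hAh.spectral_theorem
    rw [this, Unitary.conjStarAlgAut_apply, RCLike.ofReal_real_eq_id, Function.id_comp]
  have key : ∀ c : ℝ, c • (1 : Matrix (Fin d) (Fin d) ℝ) + ε • B
      = U * Matrix.diagonal (fun i => c + μ i) * star U := by
    intro c
    have h1 : c • (1 : Matrix (Fin d) (Fin d) ℝ) = U * (c • 1) * star U := by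
      rw [Matrix.mul_smul, mul_one, Matrix.smul_mul, hUU]
    rw [h1, hspec, ← Matrix.add_mul, ← Matrix.mul_add]
    congr 2
    rw [smul_one_eq_diagonal, ← Matrix.diagonal_add]
  -- Positive definiteness
  have hpos : ((1 : Matrix (Fin d) (Fin d) ℝ) + ε • B).PosDef := by
    have hsplit : (1 : Matrix (Fin d) (Fin d) ℝ) + ε • B
        = ((1/2 : ℝ) • 1 + ε • B) + (1/2 : ℝ) • (1 : Matrix (Fin d) (Fin d) ℝ) := by
      rw [add_right_comm, ← add_smul]; norm_num
    rw [hsplit]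
    apply Matrix.PosDef.posSemidef_add
    · rw [key (1/2)]
      have hd : (Matrix.diagonal (fun i => (1/2 : ℝ) + μ i)).PosSemidef :=
        Matrix.posSemidef_diagonal_iff.mpr (fun i => by have := hμ i; linarith)
      have := hd.mul_mul_conjTranspose_same U
      rwa [← Matrix.star_eq_conjTranspose] at this
    · rw [smul_one_eq_diagonal]
      exact Matrix.PosDef.diagonal (fun _ => by norm_num)
  refine ⟨hpos, ?_⟩
  -- determinant
  have hdet : ((1 : Matrix (Fin d) (Fin d) ℝ) + ε • B).det = ∏ i, (1 + μ i) := by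
    have h1 : (1 : Matrix (Fin d) (Fin d) ℝ) + ε • B
        = U * Matrix.diagonal (fun i => 1 + μ i) * star U := by
      rw [← key 1, one_smul]
    rw [h1, Matrix.det_mul_right_comm, hUU, one_mul, Matrix.det_diagonal]
  -- trace
  have htr : ε * B.trace = ∑ i, μ i := by
    have h1 : (ε • B).trace = ∑ i, μ i := by
      rw [hspec, Matrix.trace_mul_cycle, hUU', one_mul, Matrix.trace_diagonal]
    rw [← h1, Matrix.trace_smul, smul_eq_mul]
  -- Frobenius norm
  have hF : ε ^ 2 * (∑ i, ∑ j, (B i j) ^ 2) = ∑ i, (μ i) ^ 2 := by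
    have h1 : (ε • B * (ε • B)).trace = ∑ i, (μ i) ^ 2 := by
      have h2 : ε • B * (ε • B) = U * Matrix.diagonal (fun i => μ i * μ i) * star U := by
        rw [hspec]
        calc U * Matrix.diagonal μ * star U * (U * Matrix.diagonal μ * star U)
            = U * Matrix.diagonal μ * (star U * U) * Matrix.diagonal μ * star U := by
              simp only [Matrix.mul_assoc]
          _ = U * (Matrix.diagonal μ * Matrix.diagonal μ) * star U := by
              rw [hUU']; simp only [Matrix.mul_assoc, Matrix.one_mul]
          _ = U * Matrix.diagonal (fun i => μ i * μ i) * star U := by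
              rw [Matrix.diagonal_mul_diagonal]
      rw [h2, Matrix.trace_mul_cycle, hUU', one_mul, Matrix.trace_diagonal]
      exact Finset.sum_congr rfl (fun i _ => (sq (μ i)).symm)
    have h3 : (ε • B * (ε • B)).trace = ε ^ 2 * (∑ i, ∑ j, (B i j) ^ 2) := by
      have hBsymm : ∀ i j, B j i = B i j := fun i j => by
        conv_lhs => rw [← hsymm]
        rfl
      simp only [Matrix.trace, Matrix.diag, Matrix.mul_apply, Matrix.smul_apply,
        smul_eq_mul]
      rw [Finset.mul_sum]
      refine Finset.sum_congr rfl (fun i _ => ?_)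
      rw [Finset.mul_sum]
      refine Finset.sum_congr rfl (fun j _ => ?_)
      rw [hBsymm i j]; ring
    rw [← h3, h1]
  rw [hdet, htr, hF, ge_iff_le, ← Finset.sum_sub_distrib]
  have hprod : Real.log (∏ i, (1 + μ i)) = ∑ i, Real.log (1 + μ i) := by
    apply Real.log_prod
    intro i _
    have := hμ i; intro h; linarith [h]
  rw [hprod]
  exact Finset.sum_le_sum (fun i _ => log_one_add_ge_aux (μ i) (hμ i))
end
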